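/- For any Artin algebra A, the syzygy of any finitely generated A-module lies in [A/rad(A)]_{ℓℓ(A)−1}; consequently Ω(A-mod) ⊆ [A/rad(A)]_{ℓℓ(A)−1}. -/

import Mathlib

open CategoryTheory

universe u

namespace Paper

variable (A : Type u) [Ring A]

/-- A short exact sequence `0 → X → Y → Z → 0` of `A`-modules. -/
def SES (X Y Z : ModuleCat.{u} A) : Prop :=
  ∃ (f : X →ₗ[A] Y) (g : Y →ₗ[A] Z),
    Function.Injective f ∧ Function.Surjective g ∧ LinearMap.range f = LinearMap.ker g

/-- `M` is a direct summand of `X`. -/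
def IsSummand (M X : ModuleCat.{u} A) : Prop :=
  ∃ (i : M →ₗ[A] X) (r : X →ₗ[A] M), r.comp i = LinearMap.id

/-- The additive closure `add 𝒯`: direct summands of finite direct sums of objects of `𝒯`. -/
def addClosure (T : Set (ModuleCat.{u} A)) : Set (ModuleCat.{u} A) :=
  { M | ∃ (n : ℕ) (f : Fin n → ModuleCat.{u} A), (∀ j, f j ∈ T) ∧
      IsSummand A M (ModuleCat.of A (∀ j, (f j : Type u))) }

/-- The extension product `𝒞 • 𝒟`: (summands of) extensions of a module of `𝒟`
by a module of `𝒞`. -/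
def bullet (C D : Set (ModuleCat.{u} A)) : Set (ModuleCat.{u} A) :=
  addClosure A { X | ∃ C' ∈ C, ∃ D' ∈ D, SES A C' X D' }

/-- `[𝒯]ₙ`, defined by `[𝒯]₀ = {0}`, `[𝒯]₁ = add 𝒯` and `[𝒯]ₙ = [𝒯]₁ • [𝒯]ₙ₋₁`. -/
def bracket (T : Set (ModuleCat.{u} A)) : ℕ → Set (ModuleCat.{u} A)
  | 0 => { M | ∀ x : M, x = 0 }
  | 1 => addClosure A T
  | n + 2 => bullet A (addClosure A T) (bracket T (n + 1))

/-- The class `𝒯₁ ⊕ 𝒯₂ = {X ⊕ Y | X ∈ 𝒯₁, Y ∈ 𝒯₂}`. -/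
def setSum (T1 T2 : Set (ModuleCat.{u} A)) : Set (ModuleCat.{u} A) :=
  { M | ∃ X ∈ T1, ∃ Y ∈ T2, Nonempty ((M : Type u) ≃ₗ[A] (↥X × ↥Y)) }

/-- The extension dimension of a subcategory `𝒞` of `A`-mod:
the least `n` such that `𝒞 ⊆ [T]_{n+1}` for some finitely generated module `T`. -/
noncomputable def ed (C : Set (ModuleCat.{u} A)) : ℕ∞ :=
  sInf { n : ℕ∞ | ∃ m : ℕ, n = (m : ℕ∞) ∧
    ∃ T : ModuleCat.{u} A, Module.Finite A T ∧ C ⊆ bracket A {T} (m + 1) }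

/-- The category `Ωⁿ(A-mod)` of `n`-th syzygy modules: finitely generated `K` admitting
an exact sequence `0 → K → P⁰ → ⋯ → P^{n-1} → M → 0` with all `Pⁱ` projective,
encoded by a chain of short exact sequences. -/
def SyzCat (n : ℕ) : Set (ModuleCat.{u} A) :=
  { K | Module.Finite A K ∧
    ∃ (Ks : Fin (n + 1) → ModuleCat.{u} A) (P : Fin n → ModuleCat.{u} A),
      Ks 0 = K ∧ (∀ i, Module.Finite A (Ks i)) ∧
      (∀ i, Module.Finite A (P i) ∧ Module.Projective A (P i)) ∧
      ∀ i : Fin n, SES A (Ks i.castSucc) (P i) (Ks i.succ) }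

/-- The category `Ω^∞(A-mod)` of infinite syzygy modules: finitely generated `K` admitting
an exact sequence `0 → K → P⁰ → P¹ → ⋯` with all `Pⁱ` projective. -/
def InfSyzCat : Set (ModuleCat.{u} A) :=
  { K | Module.Finite A K ∧
    ∃ Ks P : ℕ → ModuleCat.{u} A,
      Ks 0 = K ∧ (∀ i, Module.Finite A (Ks i)) ∧
      (∀ i, Module.Finite A (P i) ∧ Module.Projective A (P i)) ∧
      ∀ i : ℕ, SES A (Ks i) (P i) (Ks (i + 1)) }

/-- A submodule is superfluous (small). -/
def Superfluous {M : ModuleCat.{u} A} (N : Submodule A M) : Prop :=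
  ∀ N' : Submodule A M, N ⊔ N' = ⊤ → N' = ⊤

/-- `K` is the (minimal) syzygy `Ω(M)`: the kernel of a projective cover `P → M`. -/
def IsSyzygyOf (K M : ModuleCat.{u} A) : Prop :=
  ∃ (P : ModuleCat.{u} A) (i : K →ₗ[A] P) (p : P →ₗ[A] M),
    Module.Projective A P ∧ Function.Injective i ∧ Function.Surjective p ∧
    LinearMap.range i = LinearMap.ker p ∧ Superfluous A (LinearMap.ker p)

/-- `K ≅ Ωⁿ(M)`. -/
def IsIterSyzygyOf : ℕ → ModuleCat.{u} A → ModuleCat.{u} A → Prop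
  | 0, K, M => Nonempty ((K : Type u) ≃ₗ[A] M)
  | n + 1, K, M => ∃ L, IsIterSyzygyOf n L M ∧ IsSyzygyOf A K L

/-- A submodule is essential. -/
def EssentialIn {M : ModuleCat.{u} A} (N : Submodule A M) : Prop :=
  ∀ N' : Submodule A M, N ⊓ N' = ⊥ → N' = ⊥

/-- `C` is the cosyzygy `Ω⁻¹(M)`: the cokernel of an injective envelope `M → I`. -/
def IsCosyzygyOf (C M : ModuleCat.{u} A) : Prop :=
  ∃ (I : ModuleCat.{u} A) (j : M →ₗ[A] I) (q : I →ₗ[A] C),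
    Module.Injective A I ∧ Function.Injective j ∧ Function.Surjective q ∧
    LinearMap.range j = LinearMap.ker q ∧ EssentialIn A (LinearMap.range j)

/-- `C ≅ Ω⁻ⁿ(M)`. -/
def IsIterCosyzygyOf : ℕ → ModuleCat.{u} A → ModuleCat.{u} A → Prop
  | 0, C, M => Nonempty ((C : Type u) ≃ₗ[A] M)
  | n + 1, C, M => ∃ L, IsIterCosyzygyOf n L M ∧ IsCosyzygyOf A C L

/-- The Loewy length of `A`: the least `n` with `rad(A)ⁿ = 0`, where `rad(A)` is the
Jacobson radical. -/
noncomputable def loewyLength (R : Type u) [CommRing R] [Algebra R A] : ℕ :=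
  sInf { n : ℕ | (Submodule.restrictScalars R ((⊥ : Ideal A).jacobson)) ^ n = ⊥ }

namespace PaperAux
open Submodule
variable {A : Type*} [Ring A]

variable {A : Type*} [Ring A]

/-- Jacobson radical elements send any element into any coatomic (maximal) submodule. -/
lemma jac_smul_mem_coatom {M : Type*} [AddCommGroup M] [Module A M]
    {m : Submodule A M} (hm : IsCoatom m) {j : A} (hj : j ∈ (⊥ : Ideal A).jacobson)
    (x : M) : j • x ∈ m := by
  by_cases hx : x ∈ m
  · exact m.smul_mem j hx
  have hsimple : IsSimpleModule A (M ⧸ m) := isSimpleModule_iff_isCoatom.2 hm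
  set xb : M ⧸ m := Submodule.Quotient.mk x with hxb
  have hxb0 : xb ≠ 0 := by
    simpa [hxb, Submodule.Quotient.mk_eq_zero] using hx
  set φ : A →ₗ[A] M ⧸ m := LinearMap.toSpanSingleton A (M ⧸ m) xb with hφ
  have hrange : LinearMap.range φ = ⊤ := by
    rw [hφ, ← LinearMap.span_singleton_eq_range]
    rcases eq_bot_or_eq_top (span A {xb}) with h | h
    · exact absurd (span_eq_bot.1 h xb (Set.mem_singleton _)) hxb0
    · exact h
  have hker : IsCoatom (LinearMap.ker φ) := by
    have e : (A ⧸ LinearMap.ker φ) ≃ₗ[A] (M ⧸ m) :=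
      φ.quotKerEquivRange ≪≫ₗ (LinearEquiv.ofEq _ _ hrange) ≪≫ₗ Submodule.topEquiv
    have : IsSimpleModule A (A ⧸ LinearMap.ker φ) := IsSimpleModule.congr e
    exact isSimpleModule_iff_isCoatom.1 this
  have hjk : j ∈ LinearMap.ker φ := by
    have : (⊥ : Ideal A).jacobson ≤ LinearMap.ker φ :=
      sInf_le ⟨bot_le, ⟨hker⟩⟩
    exact this hj
  have h0 : j • xb = 0 := hjk
  have hmk : (Submodule.Quotient.mk (j • x) : M ⧸ m) = j • xb := by
    rw [hxb]; exact Submodule.Quotient.mk_smul m j x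
  have hmk0 := hmk.trans h0
  rwa [Submodule.Quotient.mk_eq_zero] at hmk0

/-- The Jacobson radical is closed under right multiplication. -/
lemma mul_mem_jacobson {j : A} (hj : j ∈ (⊥ : Ideal A).jacobson) (a : A) :
    j * a ∈ (⊥ : Ideal A).jacobson := by
  refine Submodule.mem_sInf.2 ?_
  rintro I ⟨-, hI⟩
  have := jac_smul_mem_coatom (M := A) hI.out hj a
  simpa [smul_eq_mul] using this

lemma ideal_pow_add_succ (I : Ideal A) (m k : ℕ) :
    I ^ (m + (k + 1)) = I ^ m * I ^ (k + 1) := by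
  induction k with
  | zero => rw [Submodule.pow_one]; rfl
  | succ k ih =>
    show I ^ ((m + (k + 1)) + 1) = I ^ m * I ^ ((k + 1) + 1)
    rw [Submodule.pow_succ (n := m + (k + 1)), ih,
      Submodule.pow_succ (n := k + 1), Ideal.mul_assoc]

/-- Nilpotency of the Jacobson radical of a left Artinian ring. -/
lemma jacobson_nilpotent [IsArtinian A A] :
    ∃ n : ℕ, ((⊥ : Ideal A).jacobson) ^ n = ⊥ := by
  set J := (⊥ : Ideal A).jacobson with hJdef
  let f : ℕ →o (Ideal A)ᵒᵈ := ⟨fun n => J ^ n, fun _ _ h => Ideal.pow_le_pow_right h⟩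
  obtain ⟨n, hn⟩ : ∃ n, ∀ m, n ≤ m → J ^ n = J ^ m := IsArtinian.monotone_stabilizes f
  refine ⟨n + 1, ?_⟩
  have hN : ∀ m, n + 1 ≤ m → J ^ (n + 1) = J ^ m := fun m hm => by
    rw [← hn (n + 1) (Nat.le_succ n), ← hn m (le_trans (Nat.le_succ n) hm)]
  by_contra hne
  have hIJ : J ^ (n + 1) ≤ J := Ideal.pow_le_self (Nat.succ_ne_zero n)
  have hII : (J ^ (n + 1)) • (J ^ (n + 1)) = J ^ (n + 1) := by
    rw [Ideal.smul_eq_mul, ← ideal_pow_add_succ J (n + 1) n]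
    exact (hN (n + 1 + (n + 1)) (by omega)).symm
  set I : Ideal A := J ^ (n + 1) with hI
  have hne' : I • (⊤ : Ideal A) ≠ ⊥ := by
    intro h
    apply hne
    rw [eq_bot_iff]
    intro i hi
    have : i ∈ I • (⊤ : Ideal A) := by
      simpa [smul_eq_mul, mul_one] using
        Submodule.smul_mem_smul hi (Submodule.mem_top (x := (1 : A)))
    rw [h] at this
    exact this
  obtain ⟨K₀, hK₀, hmin⟩ :=
    IsArtinian.set_has_minimal {K : Ideal A | I • K ≠ ⊥} ⟨⊤, hne'⟩
  have hx' : ∃ x ∈ K₀, I • (span A {x} : Ideal A) ≠ ⊥ := by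
    by_contra h
    push_neg at h
    apply hK₀
    rw [eq_bot_iff]
    refine Submodule.smul_le.2 fun r hr k hk => ?_
    have : r • k ∈ I • (span A {k} : Ideal A) :=
      Submodule.smul_mem_smul hr (Submodule.mem_span_singleton_self k)
    rw [h k hk] at this
    exact this
  obtain ⟨x, hxK, hx⟩ := hx'
  have hle : (span A {x} : Ideal A) ≤ K₀ := by
    rw [span_le]; simpa using hxK
  have hKeq : (span A {x} : Ideal A) = K₀ :=
    (le_iff_lt_or_eq.mp hle).resolve_left (hmin _ hx)
  have hL : I • K₀ = K₀ := by
    have hmem : I • K₀ ∈ {K : Ideal A | I • K ≠ ⊥} := by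
      show I • (I • K₀) ≠ ⊥
      rw [← Submodule.smul_assoc, hII, ← hKeq]
      exact hx
    have hle' : I • K₀ ≤ K₀ :=
      Submodule.smul_le.2 fun r _ k hk => Submodule.smul_mem _ r hk
    exact (le_iff_lt_or_eq.mp hle').resolve_left (hmin _ hmem)
  have hxmem : x ∈ I • (span A {x} : Ideal A) := by
    rw [hKeq, hL]
    exact hxK
  set X : Submodule A A :=
    { carrier := {y | ∃ c ∈ J, y = c • x}
      add_mem' := by
        rintro a b ⟨c, hc, rfl⟩ ⟨d, hd, rfl⟩
        exact ⟨c + d, add_mem hc hd, by rw [add_smul]⟩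
      zero_mem' := ⟨0, zero_mem J, by rw [zero_smul]⟩
      smul_mem' := by
        rintro a y ⟨c, hc, rfl⟩
        exact ⟨a * c, Submodule.smul_mem J a hc, (mul_smul a c x).symm⟩ } with hX
  have hXle : I • (span A {x} : Ideal A) ≤ X := by
    refine Submodule.smul_le.2 fun r hr y hy => ?_
    obtain ⟨a, rfl⟩ := Submodule.mem_span_singleton.1 hy
    exact ⟨r * a, mul_mem_jacobson (hIJ hr) a, (mul_smul r a x).symm⟩
  obtain ⟨c, hc, hcx⟩ := hXle hxmem
  obtain ⟨z, hz⟩ := Ideal.mem_jacobson_iff.1 hc (-1)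
  have hz1 : z * (1 - c) = 1 := by
    have h' : z * -1 * c + z = 1 := sub_eq_zero.mp (by simpa using hz)
    rw [mul_neg_one, neg_mul, neg_add_eq_sub] at h'
    rw [mul_sub, mul_one]
    exact h'
  have hx0 : x = 0 := by
    have h1 : (1 - c) • x = 0 := by
      rw [sub_smul, one_smul, ← hcx, sub_self]
    calc x = (1 : A) • x := (one_smul A x).symm
    _ = (z * (1 - c)) • x := by rw [hz1]
    _ = z • ((1 - c) • x) := by rw [mul_smul]
    _ = 0 := by rw [h1, smul_zero]
  apply hx
  rw [hx0, Set.singleton_zero, Submodule.span_zero, Submodule.smul_bot]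


/-- Over a left Artinian ring, the Jacobson radical is a finite intersection of maximal
left ideals. -/
lemma jacobson_eq_finset_inf [IsArtinian A A] :
    ∃ s : Finset (Ideal A), (∀ m ∈ s, IsCoatom m) ∧
      (⊥ : Ideal A).jacobson = s.inf _root_.id := by
  classical
  set S : Set (Ideal A) :=
    {I | ∃ s : Finset (Ideal A), (∀ m ∈ s, IsCoatom m) ∧ I = s.inf _root_.id} with hS
  obtain ⟨I₀, ⟨s, hs, rfl⟩, hmin⟩ :=
    IsArtinian.set_has_minimal S ⟨⊤, ∅, by simp, by simp⟩
  refine ⟨s, hs, le_antisymm ?_ ?_⟩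
  · refine Finset.le_inf fun m hm => ?_
    exact sInf_le ⟨bot_le, ⟨hs m hm⟩⟩
  · refine le_sInf ?_
    rintro m ⟨-, hm⟩
    have hcoatom : IsCoatom m := hm.out
    have hmem : (s.inf id) ⊓ m ∈ S :=
      ⟨insert m s, by
        intro m' hm'
        rcases Finset.mem_insert.1 hm' with rfl | h
        · exact hcoatom
        · exact hs m' h, by rw [Finset.inf_insert]; rw [inf_comm]; rfl⟩
    have hle : s.inf _root_.id ⊓ m ≤ s.inf _root_.id := inf_le_left
    have heq : s.inf _root_.id ⊓ m = s.inf _root_.id :=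
      (le_iff_lt_or_eq.mp hle).resolve_left (hmin _ hmem)
    calc s.inf _root_.id = s.inf _root_.id ⊓ m := heq.symm
    _ ≤ m := inf_le_right

/-- Over a left Artinian ring, `A ⧸ rad A` is a semisimple module. -/
lemma isSemisimple_quotient_jacobson [IsArtinian A A] :
    IsSemisimpleModule A (A ⧸ (⊥ : Ideal A).jacobson) := by
  obtain ⟨s, hs, hJ⟩ := jacobson_eq_finset_inf (A := A)
  classical
  -- the product of the simple quotients
  have hsimple : ∀ i : s, IsSimpleModule A (A ⧸ (i : Ideal A)) := fun i =>
    isSimpleModule_iff_isCoatom.2 (hs i i.2)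
  have hss : IsSemisimpleModule A (∀ i : s, A ⧸ (i : Ideal A)) := by
    refine isSemisimpleModule_of_isSemisimpleModule_submodule'
      (p := fun i : s => LinearMap.range (LinearMap.single A (fun i : s => A ⧸ (i : Ideal A)) i))
      (fun i => ?_) (LinearMap.iSup_range_single A _)
    have := hsimple i
    have hinj : Function.Injective ⇑(LinearMap.single A (fun i : s => A ⧸ (i : Ideal A)) i) := by
      rw [LinearMap.coe_single]; exact Pi.single_injective i
    exact IsSemisimpleModule.congr
      (LinearEquiv.ofInjective (LinearMap.single A (fun i : s => A ⧸ (i : Ideal A)) i) hinj).symm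
  -- A ⧸ J embeds into the product
  set φ : A →ₗ[A] ∀ i : s, A ⧸ (i : Ideal A) :=
    LinearMap.pi (fun i : s => Submodule.mkQ (i : Ideal A)) with hφ
  have hker : LinearMap.ker φ = (⊥ : Ideal A).jacobson := by
    rw [hφ, LinearMap.ker_pi, hJ]
    simp only [Submodule.ker_mkQ]
    rw [Finset.inf_id_eq_sInf, sInf_eq_iInf']
    exact le_antisymm (le_iInf fun a => iInf_le (fun i : s => (i : Ideal A)) ⟨a.1, a.2⟩)
      (le_iInf fun a => iInf_le (fun a : (s : Set (Ideal A)) => (a : Ideal A)) ⟨a.1, a.2⟩)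
  have e : (A ⧸ (⊥ : Ideal A).jacobson) ≃ₗ[A] LinearMap.range φ :=
    (Submodule.quotEquivOfEq _ _ hker.symm) ≪≫ₗ φ.quotKerEquivRange
  exact IsSemisimpleModule.congr (M := ↥(LinearMap.range φ)) e

/-- Any module annihilated by the Jacobson radical over a left Artinian ring is semisimple. -/
lemma isSemisimple_of_jacobson_ann [IsArtinian A A] {M : Type*} [AddCommGroup M] [Module A M]
    (h : ∀ j ∈ (⊥ : Ideal A).jacobson, ∀ x : M, j • x = 0) :
    IsSemisimpleModule A M := by
  have hss := isSemisimple_quotient_jacobson (A := A)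
  refine isSemisimpleModule_of_isSemisimpleModule_submodule'
    (p := fun x : M => span A {x}) (fun x => ?_) ?_
  · -- span {x} is a quotient of A ⧸ J
    set ℓ : A →ₗ[A] M := LinearMap.toSpanSingleton A M x with hℓ
    have hJker : (⊥ : Ideal A).jacobson ≤ LinearMap.ker ℓ := fun j hj => by
      simp [hℓ, LinearMap.mem_ker, LinearMap.toSpanSingleton_apply, h j hj x]
    set ℓ' : (A ⧸ (⊥ : Ideal A).jacobson) →ₗ[A] M := Submodule.liftQ _ ℓ hJker with hℓ'
    have hr : LinearMap.range ℓ' = span A {x} := by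
      rw [hℓ', Submodule.range_liftQ, hℓ, ← LinearMap.span_singleton_eq_range]
    have : IsSemisimpleModule A (LinearMap.range ℓ') := IsSemisimpleModule.range ℓ'
    rw [hr] at this
    exact this
  · refine top_le_iff.1 fun x _ => ?_
    exact le_iSup (fun x : M => span A {x}) x (mem_span_singleton_self x)

/-- A surjection out of a semisimple module splits. -/
lemma exists_section {M N : Type*} [AddCommGroup M] [Module A M]
    [AddCommGroup N] [Module A N] [IsSemisimpleModule A M]
    (q : M →ₗ[A] N) (hq : Function.Surjective q) :
    ∃ s : N →ₗ[A] M, q.comp s = LinearMap.id := by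
  obtain ⟨c, hc⟩ := exists_isCompl (LinearMap.ker q)
  have hinj : Function.Injective (q.comp c.subtype) := by
    rw [← LinearMap.ker_eq_bot, LinearMap.ker_comp, eq_bot_iff]
    rintro ⟨x, hxc⟩ hx
    have hx' : x ∈ LinearMap.ker q := hx
    have : x ∈ (⊥ : Submodule A M) := hc.disjoint.le_bot ⟨hx', hxc⟩
    exact Subtype.ext (by simpa using this)
  have hsurj : Function.Surjective (q.comp c.subtype) := by
    intro n
    obtain ⟨m, rfl⟩ := hq n
    have : m ∈ LinearMap.ker q ⊔ c := by rw [hc.sup_eq_top]; trivial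
    obtain ⟨k, hk, y, hy, rfl⟩ := Submodule.mem_sup.1 this
    exact ⟨⟨y, hy⟩, by simp [LinearMap.mem_ker.1 hk]⟩
  set e : c ≃ₗ[A] N := LinearEquiv.ofBijective _ ⟨hinj, hsurj⟩ with he
  refine ⟨c.subtype.comp (e.symm : N →ₗ[A] c), ?_⟩
  ext n
  have : (q.comp c.subtype) (e.symm n) = n := e.apply_symm_apply n
  simpa using this

/-- A superfluous submodule is contained in `rad A • P`. -/
lemma superfluous_le_jac_smul [IsArtinian A A] {P : Type*} [AddCommGroup P] [Module A P]
    {N : Submodule A P} (hN : ∀ N' : Submodule A P, N ⊔ N' = ⊤ → N' = ⊤) :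
    N ≤ ((⊥ : Ideal A).jacobson) • (⊤ : Submodule A P) := by
  set S : Submodule A P := ((⊥ : Ideal A).jacobson) • (⊤ : Submodule A P) with hS
  have hann : ∀ j ∈ (⊥ : Ideal A).jacobson, ∀ x : P ⧸ S, j • x = 0 := by
    intro j hj x
    obtain ⟨y, rfl⟩ := Submodule.Quotient.mk_surjective S x
    have : (Submodule.Quotient.mk (j • y) : P ⧸ S) = 0 := by
      rw [Submodule.Quotient.mk_eq_zero]
      exact Submodule.smul_mem_smul hj trivial
    rw [← this, Submodule.Quotient.mk_smul]
  have hss : IsSemisimpleModule A (P ⧸ S) := isSemisimple_of_jacobson_ann hann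
  -- the image of N in P ⧸ S is superfluous
  set Nb : Submodule A (P ⧸ S) := N.map S.mkQ with hNb
  have hNbsf : ∀ Q : Submodule A (P ⧸ S), Nb ⊔ Q = ⊤ → Q = ⊤ := by
    intro Q hQ
    have hm : N ⊔ Q.comap S.mkQ = ⊤ := by
      rw [eq_top_iff]
      intro z _
      have hz : (S.mkQ z : P ⧸ S) ∈ Nb ⊔ Q := by rw [hQ]; trivial
      obtain ⟨a, ha, b, hb, hab⟩ := Submodule.mem_sup.1 hz
      obtain ⟨n, hn, rfl⟩ := Submodule.mem_map.1 ha
      have : z - n ∈ Q.comap S.mkQ := by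
        simp only [Submodule.mem_comap, map_sub]
        rw [show S.mkQ n = S.mkQ z - b from by rw [← hab]; abel]
        simpa using hb
      exact Submodule.mem_sup.2 ⟨n, hn, z - n, this, by abel⟩
    have := hN _ hm
    rw [← Submodule.map_comap_eq_self (f := S.mkQ) (q := Q) (by rw [Submodule.range_mkQ]; exact le_top),
      this, Submodule.map_top, Submodule.range_mkQ]
  -- in a semisimple module a superfluous submodule is zero
  obtain ⟨c, hc⟩ := exists_isCompl Nb
  have hctop : c = ⊤ := hNbsf c hc.sup_eq_top
  have hNbbot : Nb = ⊥ := by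
    have := hc.inf_eq_bot
    rw [hctop, inf_top_eq] at this
    exact this
  have : N ≤ LinearMap.ker S.mkQ := by
    intro x hx
    have : S.mkQ x ∈ Nb := Submodule.mem_map_of_mem hx
    rw [hNbbot] at this
    simpa using this
  rwa [Submodule.ker_mkQ] at this

end PaperAux

namespace PaperAux
open Submodule
variable {A : Type u} [Ring A]

/-- Self membership in addClosure. -/
lemma mem_addClosure_self (S : Set (ModuleCat.{u} A)) {N : ModuleCat.{u} A} (h : N ∈ S) :
    N ∈ Paper.addClosure A S := by
  refine ⟨1, fun _ => N, fun _ => h, LinearMap.pi fun _ => LinearMap.id, LinearMap.proj 0, ?_⟩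
  ext x
  rfl

/-- A finitely generated module annihilated by the radical lies in `add (A/rad A)`. -/
lemma mem_addClosure_of_ann [IsArtinian A A] (N : ModuleCat.{u} A)
    (hfin : Module.Finite A N)
    (h : ∀ j ∈ (⊥ : Ideal A).jacobson, ∀ x : N, j • x = 0) :
    N ∈ Paper.addClosure A
      {ModuleCat.of A (A ⧸ (Submodule.restrictScalars A ((⊥ : Ideal A).jacobson)))} := by
  classical
  haveI := hfin
  set J : Ideal A := (⊥ : Ideal A).jacobson with hJ
  obtain ⟨k, x, hx⟩ := Module.Finite.exists_fin (R := A) (M := N)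
  -- the lifted maps (A ⧸ J) → N
  have hker : ∀ i : Fin k, (Submodule.restrictScalars A J) ≤
      LinearMap.ker (LinearMap.toSpanSingleton A N (x i)) := fun i j hj => by
    simpa [LinearMap.mem_ker, LinearMap.toSpanSingleton_apply] using h j hj (x i)
  set q : (∀ _ : Fin k, A ⧸ (Submodule.restrictScalars A J)) →ₗ[A] N :=
    (LinearMap.lsum A (fun _ : Fin k => A ⧸ (Submodule.restrictScalars A J)) ℕ)
      (fun i => Submodule.liftQ _ (LinearMap.toSpanSingleton A N (x i)) (hker i)) with hq
  have hq1 : ∀ i : Fin k,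
      q (Pi.single i (Submodule.Quotient.mk (1 : A))) = x i := by
    intro i
    rw [hq]
    rw [LinearMap.lsum_apply]
    simp only [LinearMap.coe_sum, LinearMap.coe_comp, Function.comp_apply,
      Finset.sum_apply, LinearMap.coe_proj, Function.eval, Pi.single_apply]
    rw [Finset.sum_eq_single i]
    · simp [Submodule.liftQ_apply, LinearMap.toSpanSingleton_apply]
    · intro b _ hb
      simp [hb]
    · intro hi
      exact absurd (Finset.mem_univ i) hi
  have hqsurj : Function.Surjective q := by
    rw [← LinearMap.range_eq_top, eq_top_iff, ← hx, Submodule.span_le]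
    rintro - ⟨i, rfl⟩
    exact ⟨Pi.single i (Submodule.Quotient.mk (1 : A)), hq1 i⟩
  have hann : ∀ j ∈ (⊥ : Ideal A).jacobson,
      ∀ v : (∀ _ : Fin k, A ⧸ (Submodule.restrictScalars A J)), j • v = 0 := by
    intro j hj v
    funext i
    show j • v i = 0
    obtain ⟨a, ha⟩ := Submodule.Quotient.mk_surjective _ (v i)
    rw [← ha]
    show j • Submodule.Quotient.mk a = (0 : A ⧸ (Submodule.restrictScalars A J))
    rw [← Submodule.Quotient.mk_smul, Submodule.Quotient.mk_eq_zero]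
    show j • a ∈ J
    exact mul_mem_jacobson hj a
  haveI : IsSemisimpleModule A (∀ _ : Fin k, A ⧸ (Submodule.restrictScalars A J)) :=
    isSemisimple_of_jacobson_ann hann
  obtain ⟨sec, hsec⟩ := exists_section q hqsurj
  exact ⟨k, fun _ => ModuleCat.of A (A ⧸ (Submodule.restrictScalars A J)),
    fun _ => rfl, sec, q, hsec⟩

/-- Main induction: Artinian modules with radical-power zero lie in the brackets. -/
lemma mem_bracket_of_pow_ann [IsArtinian A A] :
    ∀ (m : ℕ) (N : ModuleCat.{u} A), IsArtinian A N →
      (((⊥ : Ideal A).jacobson) ^ m • (⊤ : Submodule A N) = ⊥) →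
      N ∈ Paper.bracket A
        {ModuleCat.of A (A ⧸ (Submodule.restrictScalars A ((⊥ : Ideal A).jacobson)))} m := by
  intro m
  induction m with
  | zero =>
    intro N _ hpow
    rw [Submodule.pow_zero, Ideal.one_eq_top, Submodule.top_smul] at hpow
    intro x
    have : x ∈ (⊤ : Submodule A N) := trivial
    rw [hpow] at this
    simpa using this
  | succ m ih =>
    intro N hart hpow
    haveI := hart
    set J : Ideal A := (⊥ : Ideal A).jacobson with hJ
    cases m with
    | zero =>
      -- semisimple case
      have hann : ∀ j ∈ (⊥ : Ideal A).jacobson, ∀ x : N, j • x = 0 := by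
        intro j hj x
        have : j • x ∈ J ^ 1 • (⊤ : Submodule A N) :=
          Submodule.smul_mem_smul (by rwa [Submodule.pow_one]) trivial
        rw [hpow] at this
        simpa using this
      haveI hss : IsSemisimpleModule A N := isSemisimple_of_jacobson_ann hann
      have hfin : Module.Finite A N := (IsSemisimpleModule.finite_tfae.out 2 0).mp hart
      exact mem_addClosure_of_ann N hfin hann
    | succ m' =>
      -- extension case
      set S : Submodule A N := J ^ (m' + 1) • (⊤ : Submodule A N) with hSdef
      have hJS : J • S = ⊥ := by
        rw [hSdef, ← Submodule.smul_assoc]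
        have h1 : J • J ^ (m' + 1) = J ^ (m' + 1 + 1) := by
          have := ideal_pow_add_succ J 1 m'
          rw [Submodule.pow_one] at this
          rw [Ideal.smul_eq_mul, ← this]
          congr 1
          omega
        rw [h1]
        exact hpow
      -- the submodule layer
      have hannS : ∀ j ∈ (⊥ : Ideal A).jacobson, ∀ y : S, j • y = 0 := by
        intro j hj y
        have hmem : (j • (y : N)) ∈ J • S := Submodule.smul_mem_smul hj y.2
        rw [hJS] at hmem
        exact Subtype.ext (by simpa using hmem)
      haveI hssS : IsSemisimpleModule A S := isSemisimple_of_jacobson_ann hannS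
      haveI hartS : IsArtinian A S := inferInstance
      have hfinS : Module.Finite A S :=
        ((IsSemisimpleModule.finite_tfae (R := A) (M := S)).out 2 0).mp hartS
      have hC : ModuleCat.of A S ∈ Paper.addClosure A
          {ModuleCat.of A (A ⧸ (Submodule.restrictScalars A ((⊥ : Ideal A).jacobson)))} :=
        mem_addClosure_of_ann (ModuleCat.of A S) hfinS hannS
      -- the quotient
      have hpowQ : J ^ (m' + 1) • (⊤ : Submodule A (N ⧸ S)) = ⊥ := by
        have : (⊤ : Submodule A (N ⧸ S)) = Submodule.map S.mkQ ⊤ := by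
          rw [Submodule.map_top, Submodule.range_mkQ]
        rw [this, ← Submodule.map_smul'']
        rw [eq_bot_iff]
        rintro - ⟨y, hy, rfl⟩
        have : y ∈ S := hy
        simpa [Submodule.Quotient.mk_eq_zero] using this
      have hD : ModuleCat.of A (N ⧸ S) ∈ Paper.bracket A
          {ModuleCat.of A (A ⧸ (Submodule.restrictScalars A ((⊥ : Ideal A).jacobson)))}
          (m' + 1) :=
        ih (ModuleCat.of A (N ⧸ S)) (inferInstance : IsArtinian A (N ⧸ S)) hpowQ
      -- assemble the extension
      show N ∈ Paper.bullet A _ _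
      refine mem_addClosure_self _ ?_
      exact ⟨ModuleCat.of A S, hC, ModuleCat.of A (N ⧸ S), hD,
        ⟨S.subtype, S.mkQ, Submodule.injective_subtype S, Submodule.mkQ_surjective S,
          by rw [Submodule.range_subtype, Submodule.ker_mkQ]⟩⟩

end PaperAux

namespace PaperAux
open Submodule
variable {A : Type u} [Ring A]

lemma restrictScalars_pow (R : Type*) [CommRing R] [Algebra R A]
    (I : Ideal A) : ∀ {n : ℕ}, n ≠ 0 →
    (Submodule.restrictScalars R I) ^ n = Submodule.restrictScalars R (I ^ n) := by
  intro n hn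
  induction n with
  | zero => exact absurd rfl hn
  | succ k ih =>
    rcases Nat.eq_zero_or_pos k with rfl | hk
    · rw [Submodule.pow_one, Submodule.pow_one]
    · rw [Submodule.pow_succ, Submodule.pow_succ, Submodule.restrictScalars_mul,
        ih (Nat.pos_iff_ne_zero.1 hk)]

end PaperAux

/-- over an Artin algebra `A`, the syzygy `Ω(M)` (kernel of a projective
cover) of any finitely generated `A`-module `M` lies in `[A/rad A]_{ℓℓ(A)-1}`;
consequently `Ω(A-mod) ⊆ [A/rad A]_{ℓℓ(A)-1}`. -/
theorem stmt8 (R : Type u) [CommRing R] [IsArtinianRing R]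
    [Algebra R A] [Module.Finite R A]
    (M K : ModuleCat.{u} A) (hM : Module.Finite A M)
    (hK : IsSyzygyOf A K M) :
    K ∈ bracket A {ModuleCat.of A (A ⧸ (Submodule.restrictScalars A ((⊥ : Ideal A).jacobson)))}
      (loewyLength A R - 1) := by
  classical
  haveI := hM
  haveI : IsArtinianRing A := IsArtinianRing.of_finite R A
  obtain ⟨k, hk⟩ := PaperAux.jacobson_nilpotent (A := A)
  have hk1 : ((⊥ : Ideal A).jacobson) ^ (k + 1) = ⊥ := by
    rw [Submodule.pow_succ, hk, Ideal.bot_mul]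
  have hmemset : (k + 1) ∈
      {n : ℕ | (Submodule.restrictScalars R ((⊥ : Ideal A).jacobson)) ^ n = ⊥} := by
    show _ = ⊥
    rw [PaperAux.restrictScalars_pow R _ (Nat.succ_ne_zero k), hk1]
    exact Submodule.restrictScalars_bot R A A
  have hLLmem : (Submodule.restrictScalars R ((⊥ : Ideal A).jacobson)) ^ (loewyLength A R) = ⊥ :=
    Nat.sInf_mem ⟨k + 1, hmemset⟩
  cases hn : loewyLength A R with
  | zero =>
    rw [hn, Submodule.pow_zero] at hLLmem
    have h1 : (1 : A) ∈ (1 : Submodule R A) := Submodule.one_le.mp le_rfl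
    rw [hLLmem] at h1
    have h10 : (1 : A) = 0 := by simpa using h1
    show ∀ x : K, x = 0
    intro x
    calc x = (1 : A) • x := (one_smul A x).symm
    _ = (0 : A) • x := by rw [h10]
    _ = 0 := zero_smul A x
  | succ m =>
    rw [hn, PaperAux.restrictScalars_pow R _ (Nat.succ_ne_zero m)] at hLLmem
    have hJm1 : ((⊥ : Ideal A).jacobson) ^ (m + 1) = ⊥ := by
      rw [eq_bot_iff]
      intro y hy
      have hy' : y ∈ Submodule.restrictScalars R (((⊥ : Ideal A).jacobson) ^ (m + 1)) := hy
      rw [hLLmem] at hy'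
      simpa using hy'
    obtain ⟨P, i, p, hProj, hi, hp, hrange, hsf⟩ := hK
    -- P is finitely generated since M is and the kernel is superfluous
    obtain ⟨kM, xM, hxM⟩ := Module.Finite.exists_fin (R := A) (M := M)
    choose y hy using fun t => hp (xM t)
    have hmap : Submodule.map p (Submodule.span A (Set.range y)) = ⊤ := by
      rw [Submodule.map_span, ← Set.range_comp]
      have hc : (⇑p ∘ y) = xM := funext fun t => hy t
      rw [hc, hxM]
    have hsup : LinearMap.ker p ⊔ Submodule.span A (Set.range y) = ⊤ := by
      rw [eq_top_iff]
      intro z _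
      have hz : p z ∈ Submodule.map p (Submodule.span A (Set.range y)) := by
        rw [hmap]; trivial
      obtain ⟨w, hw, hwz⟩ := hz
      refine Submodule.mem_sup.2 ⟨z - w, ?_, w, hw, by abel⟩
      simp only [LinearMap.mem_ker, map_sub, hwz, sub_self]
    have hP₀top : Submodule.span A (Set.range y) = ⊤ := hsf _ hsup
    haveI hPfin : Module.Finite A P := by
      rw [Module.finite_def, ← hP₀top]
      exact Submodule.fg_span (Set.finite_range y)
    haveI hPart : IsArtinian A P := inferInstance
    haveI hKart : IsArtinian A K := isArtinian_of_injective i hi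
    have hkerle : LinearMap.ker p ≤ ((⊥ : Ideal A).jacobson) • (⊤ : Submodule A P) :=
      PaperAux.superfluous_le_jac_smul hsf
    have hpow : ((⊥ : Ideal A).jacobson) ^ m • (⊤ : Submodule A K) = ⊥ := by
      have h1 : Submodule.map i (((⊥ : Ideal A).jacobson) ^ m • ⊤)
          = ((⊥ : Ideal A).jacobson) ^ m • LinearMap.range i := by
        rw [Submodule.map_smul'', Submodule.map_top]
      have h2 : ((⊥ : Ideal A).jacobson) ^ m • LinearMap.range i ≤ ⊥ := by
        rw [hrange]
        calc ((⊥ : Ideal A).jacobson) ^ m • LinearMap.ker p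
            ≤ ((⊥ : Ideal A).jacobson) ^ m •
              (((⊥ : Ideal A).jacobson) • (⊤ : Submodule A P)) :=
          smul_mono_right _ hkerle
        _ = (((⊥ : Ideal A).jacobson) ^ m • ((⊥ : Ideal A).jacobson)) • ⊤ :=
          (Submodule.smul_assoc _ _ _).symm
        _ = ((⊥ : Ideal A).jacobson) ^ (m + 1) • ⊤ := by
          rw [Ideal.smul_eq_mul, ← Submodule.pow_succ]
        _ = ⊥ := by rw [hJm1, Submodule.bot_smul]
      rw [eq_bot_iff]
      intro z hz
      have hmem : i z ∈ Submodule.map i (((⊥ : Ideal A).jacobson) ^ m • ⊤) :=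
        Submodule.mem_map_of_mem hz
      rw [h1] at hmem
      have hz0 : i z = 0 := by simpa using h2 hmem
      have hz1 : z = 0 := hi (by simpa using hz0)
      simp [hz1]
    exact PaperAux.mem_bracket_of_pow_ann m K hKart hpow


end Paper
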